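/- Hyperbolic analogue of Lemma 2.2, second part (the dual face formula in the hyperboloid model, vertex-star form, Section 3.1). Let (m, p_0, p) be a hyperbolic vertex star with edge weights c_j and vertex weight d_0. Then ∑_{j∈ZMod m} c_j·p_j = ( 2·d_0 + ∑_{j∈ZMod m} c_j )·p_0; equivalently, ∑_{j∈ZMod m} c_j·(p_j − p_0) = 2·d_0·p_0. (This is the hyperbolic analogue of the spherical identity, with a sign change in the d-term.) -/

import Mathlib

noncomputable section

/-- Minkowski inner product on `ℝ³` (signature `(−,+,+)`). -/
def mink (x y : Fin 3 → ℝ) : ℝ := -(x 0 * y 0) + x 1 * y 1 + x 2 * y 2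

/-- Cross product on `ℝ³` (Euclidean), used for the determinant. -/
def cross3 (x y : Fin 3 → ℝ) : Fin 3 → ℝ :=
  ![x 1 * y 2 - x 2 * y 1, x 2 * y 0 - x 0 * y 2, x 0 * y 1 - x 1 * y 0]

/-- Standard inner product on `ℝ³`. -/
def dot3 (x y : Fin 3 → ℝ) : ℝ := x 0 * y 0 + x 1 * y 1 + x 2 * y 2

/-- Determinant of three vectors in `ℝ³`. -/
def det3 (x y z : Fin 3 → ℝ) : ℝ := dot3 (cross3 x y) z

/-- The hyperboloid model of the hyperbolic plane. -/
def inH2 (x : Fin 3 → ℝ) : Prop := mink x x = -1 ∧ 0 < x 0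

/-- Inverse hyperbolic cosine. -/
def arcosh (x : ℝ) : ℝ := Real.log (x + Real.sqrt (x ^ 2 - 1))

/-- Hyperbolic angle at `p` between `b` and `c` (all points of `ℍ²`). -/
def hypAngle (p b c : Fin 3 → ℝ) : ℝ :=
  Real.arccos (mink (b + mink p b • p) (c + mink p c • p) /
    (Real.sqrt (mink (b + mink p b • p) (b + mink p b • p)) *
     Real.sqrt (mink (c + mink p c • p) (c + mink p c • p))))

/-- Minkowski cross product. -/
def mcross (x y : Fin 3 → ℝ) : Fin 3 → ℝ :=
  ![-(x 1 * y 2 - x 2 * y 1), x 2 * y 0 - x 0 * y 2, x 0 * y 1 - x 1 * y 0]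

lemma det3_expand (x y z : Fin 3 → ℝ) : det3 x y z =
    (x 1 * y 2 - x 2 * y 1) * z 0 + (x 2 * y 0 - x 0 * y 2) * z 1
      + (x 0 * y 1 - x 1 * y 0) * z 2 := by
  simp [det3, dot3, cross3]

lemma mink_mcross (x y z : Fin 3 → ℝ) : mink (mcross x y) z = det3 x y z := by
  simp [mink, mcross, det3_expand]; ring

lemma mink_comm (x y : Fin 3 → ℝ) : mink x y = mink y x := by simp [mink]; ring

lemma det3_xyx (x y : Fin 3 → ℝ) : det3 x y x = 0 := by rw [det3_expand]; ring

lemma det3_xyy (x y : Fin 3 → ℝ) : det3 x y y = 0 := by rw [det3_expand]; ring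

lemma det3_swap23 (x y z : Fin 3 → ℝ) : det3 x z y = -det3 x y z := by
  rw [det3_expand, det3_expand]; ring

lemma mink_comb_left (r s e f : ℝ) (U W X Z : Fin 3 → ℝ) :
    mink (r • (U + e • Z) + s • (W + f • Z)) X
      = r * (mink U X + e * mink Z X) + s * (mink W X + f * mink Z X) := by
  simp [mink, Pi.add_apply, Pi.smul_apply, smul_eq_mul]; ring

lemma mink_sub_smul (k l : ℝ) (M N X : Fin 3 → ℝ) :
    mink (k • M - l • N) X = k * mink M X - l * mink N X := by
  simp [mink, Pi.sub_apply, Pi.smul_apply, smul_eq_mul]; ring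

lemma gram (A B C : Fin 3 → ℝ) (hA : mink A A = -1) (hB : mink B B = -1)
    (hC : mink C C = -1) :
    det3 A B C ^ 2 = 1 - 2 * mink A B * mink A C * mink B C
      - (mink A B)^2 - (mink A C)^2 - (mink B C)^2 := by
  have key : det3 A B C ^ 2
      = -(mink A A * (mink B B * mink C C - mink B C ^ 2)
          - mink A B * (mink A B * mink C C - mink B C * mink A C)
          + mink A C * (mink A B * mink B C - mink B B * mink A C)) := by
    simp only [mink, det3_expand]; ring
  rw [key, hA, hB, hC]; ring

lemma mink_le (A B : Fin 3 → ℝ) (hA : inH2 A) (hB : inH2 B) : mink A B ≤ -1 := by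
  obtain ⟨hA1, hA2⟩ := hA
  obtain ⟨hB1, hB2⟩ := hB
  simp only [mink] at hA1 hB1 ⊢
  nlinarith [sq_nonneg (A 1 - B 1), sq_nonneg (A 2 - B 2),
    sq_nonneg (A 1 * B 2 - A 2 * B 1), mul_pos hA2 hB2,
    sq_nonneg (A 0 * B 0 - 1), sq_nonneg (A 0 - B 0),
    sq_nonneg (A 0 * B 0 + 1 + A 1 * B 1 + A 2 * B 2)]

lemma mink_basis_eq (A B C x y : Fin 3 → ℝ) (hV : det3 A B C ≠ 0)
    (h1 : mink x A = mink y A) (h2 : mink x B = mink y B)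
    (h3 : mink x C = mink y C) : x = y := by
  simp only [mink] at h1 h2 h3
  have e0 : x 0 = y 0 := by
    refine mul_left_cancel₀ hV ?_
    rw [det3_expand]
    linear_combination (-(B 1 * C 2 - B 2 * C 1)) * h1 + (A 1 * C 2 - A 2 * C 1) * h2
      + (-(A 1 * B 2 - A 2 * B 1)) * h3
  have e1 : x 1 = y 1 := by
    refine mul_left_cancel₀ hV ?_
    rw [det3_expand]
    linear_combination (-(B 0 * C 2 - B 2 * C 0)) * h1 + (A 0 * C 2 - A 2 * C 0) * h2
      + (-(A 0 * B 2 - A 2 * B 0)) * h3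
  have e2 : x 2 = y 2 := by
    refine mul_left_cancel₀ hV ?_
    rw [det3_expand]
    linear_combination ((B 0 * C 1 - B 1 * C 0)) * h1 + (-(A 0 * C 1 - A 1 * C 0)) * h2
      + ((A 0 * B 1 - A 1 * B 0)) * h3
  funext i
  fin_cases i
  · exact e0
  · exact e1
  · exact e2

lemma hypAngle_eq (P X Y : Fin 3 → ℝ) (hP : mink P P = -1) (hX : mink X X = -1)
    (hY : mink Y Y = -1) :
    hypAngle P X Y = Real.arccos ((mink X Y + mink P X * mink P Y) /
      (Real.sqrt ((mink P X)^2 - 1) * Real.sqrt ((mink P Y)^2 - 1))) := by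
  unfold hypAngle
  have h1 : mink (X + mink P X • P) (Y + mink P Y • P)
      = mink X Y + mink P X * mink P Y := by
    simp only [mink, Pi.add_apply, Pi.smul_apply, smul_eq_mul] at hP ⊢
    linear_combination ((-(P 0 * X 0) + P 1 * X 1 + P 2 * X 2) *
      (-(P 0 * Y 0) + P 1 * Y 1 + P 2 * Y 2)) * hP
  have h2 : mink (X + mink P X • P) (X + mink P X • P) = (mink P X)^2 - 1 := by
    simp only [mink, Pi.add_apply, Pi.smul_apply, smul_eq_mul] at hP hX ⊢
    linear_combination ((-(P 0 * X 0) + P 1 * X 1 + P 2 * X 2) *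
      (-(P 0 * X 0) + P 1 * X 1 + P 2 * X 2)) * hP + hX
  have h3 : mink (Y + mink P Y • P) (Y + mink P Y • P) = (mink P Y)^2 - 1 := by
    simp only [mink, Pi.add_apply, Pi.smul_apply, smul_eq_mul] at hP hY ⊢
    linear_combination ((-(P 0 * Y 0) + P 1 * Y 1 + P 2 * Y 2) *
      (-(P 0 * Y 0) + P 1 * Y 1 + P 2 * Y 2)) * hP + hY
  rw [h1, h2, h3]

lemma cosh_arcosh {x : ℝ} (hx : 1 ≤ x) : Real.cosh (arcosh x) = x := by
  have hs : Real.sqrt (x ^ 2 - 1) ^ 2 = x ^ 2 - 1 := Real.sq_sqrt (by nlinarith)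
  have hs0 : 0 ≤ Real.sqrt (x ^ 2 - 1) := Real.sqrt_nonneg _
  have hpos : 0 < x + Real.sqrt (x ^ 2 - 1) := by nlinarith
  rw [arcosh, Real.cosh_log hpos]
  have hinv : (x + Real.sqrt (x ^ 2 - 1))⁻¹ = x - Real.sqrt (x ^ 2 - 1) :=
    inv_eq_of_mul_eq_one_right (by nlinarith)
  rw [hinv]; ring

lemma two_cosh_sq_half {x : ℝ} (hx : 1 ≤ x) :
    2 * Real.cosh (arcosh x / 2) ^ 2 = x + 1 := by
  have h := Real.cosh_two_mul (arcosh x / 2)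
  have h2 : Real.sinh (arcosh x / 2) ^ 2 = Real.cosh (arcosh x / 2) ^ 2 - 1 := Real.sinh_sq _
  have h3 : (2 : ℝ) * (arcosh x / 2) = arcosh x := by ring
  rw [h3] at h
  rw [cosh_arcosh hx] at h
  linarith

lemma sinh_sq_half {x : ℝ} (hx : 1 ≤ x) :
    Real.sinh (arcosh x / 2) ^ 2 = (x - 1) / 2 := by
  have h2 : Real.sinh (arcosh x / 2) ^ 2 = Real.cosh (arcosh x / 2) ^ 2 - 1 := Real.sinh_sq _
  have := two_cosh_sq_half hx
  linarith


lemma tan_half' (x : ℝ) (h : Real.cos x ≠ -1) :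
    Real.tan (x / 2) = Real.sin x / (1 + Real.cos x) := by
  have hc : Real.cos x = 2 * Real.cos (x / 2) ^ 2 - 1 := by
    rw [show x = 2 * (x / 2) by ring, Real.cos_two_mul]; ring_nf
  have hs : Real.sin x = 2 * Real.sin (x / 2) * Real.cos (x / 2) := by
    rw [show x = 2 * (x / 2) by ring, Real.sin_two_mul]; ring_nf
  have h2 : Real.cos (x / 2) ≠ 0 := by
    intro h0; apply h; rw [hc, h0]; ring
  rw [Real.tan_eq_sin_div_cos, hs, hc]
  field_simp
  ring

lemma S1core (a b c V sa sb sc α β γ : ℝ) (hV : 0 < V)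
    (hsa0 : 0 < sa) (hsb0 : 0 < sb) (hsc0 : 0 < sc)
    (ha : 1 < a) (hb : 1 < b) (hc : 1 < c)
    (hV2 : V^2 = 2*a*b*c + 1 - a^2 - b^2 - c^2)
    (hcα : Real.cos α = (b*c-a)/(sc*sb)) (hsα : Real.sin α = V/(sc*sb))
    (hcβ : Real.cos β = (a*c-b)/(sa*sc)) (hsβ : Real.sin β = V/(sa*sc))
    (hcγ : Real.cos γ = (a*b-c)/(sb*sa)) (hsγ : Real.sin γ = V/(sb*sa))
    (hsa2 : sa^2 = a^2-1) (hsb2 : sb^2 = b^2-1) (hsc2 : sc^2 = c^2-1) :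
    Real.tan ((α + β - γ)/2) = (a+b-c-1)/V := by
  have hsa0' : sa ≠ 0 := ne_of_gt hsa0
  have hsb0' : sb ≠ 0 := ne_of_gt hsb0
  have hsc0' : sc ≠ 0 := ne_of_gt hsc0
  have hV0' : V ≠ 0 := ne_of_gt hV
  have hK0 : (a+1)*(b+1)*(c-1) ≠ 0 := by 
    have h1 : (0:ℝ) < a + 1 := by linarith
    have h2 : (0:ℝ) < b + 1 := by linarith
    have h3 : (0:ℝ) < c - 1 := by linarith
    positivity
  have hsin : Real.sin (α + β - γ)
      = ((a+b-c-1)*((a+1)*(b+1)*(c-1))*V)/(sa^2*sb^2*sc^2) := by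
    have h1 : Real.sin (α + β - γ)
        = (V*(a*c-b)*(a*b-c) + (b*c-a)*(a*b-c)*V - ((b*c-a)*(a*c-b) - V^2)*V)
          / (sa^2*sb^2*sc^2) := by
      rw [Real.sin_sub, Real.sin_add, Real.cos_add, hcα, hsα, hcβ, hsβ, hcγ, hsγ]
      field_simp
    rw [h1, show V*(a*c-b)*(a*b-c) + (b*c-a)*(a*b-c)*V - ((b*c-a)*(a*c-b) - V^2)*V
        = (a+b-c-1)*((a+1)*(b+1)*(c-1))*V from by linear_combination V * hV2]
  have hcos : 1 + Real.cos (α + β - γ)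
      = ((a+1)*(b+1)*(c-1)*V^2)/(sa^2*sb^2*sc^2) := by
    have h1 : 1 + Real.cos (α + β - γ)
        = (sa^2*sb^2*sc^2 + ((b*c-a)*(a*c-b) - V^2)*(a*b-c) + ((a*c-b) + (b*c-a))*V^2)
          / (sa^2*sb^2*sc^2) := by
      rw [Real.cos_sub, Real.cos_add, Real.sin_add, hcα, hsα, hcβ, hsβ, hcγ, hsγ]
      field_simp
      ring
    rw [h1, show sa^2*sb^2*sc^2 + ((b*c-a)*(a*c-b) - V^2)*(a*b-c) + ((a*c-b) + (b*c-a))*V^2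
        = (a+1)*(b+1)*(c-1)*V^2 from by
      linear_combination (sb^2*sc^2) * hsa2 + ((a^2-1)*sc^2) * hsb2 + ((a^2-1)*(b^2-1)) * hsc2
        + ((a*c-b) + (b*c-a) - (a*b-c) - (a+1)*(b+1)*(c-1)) * hV2]
  have hcpos : 0 < 1 + Real.cos (α + β - γ) := by
    rw [hcos]
    have h1 : (0:ℝ) < a + 1 := by linarith
    have h2 : (0:ℝ) < b + 1 := by linarith
    have h3 : (0:ℝ) < c - 1 := by linarith
    positivity
  have hne : Real.cos (α + β - γ) ≠ -1 := by intro h0; rw [h0] at hcpos; norm_num at hcpos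
  have h1 : (0:ℝ) < a + 1 := by linarith
  have h2 : (0:ℝ) < b + 1 := by linarith
  have h3 : (0:ℝ) < c - 1 := by linarith
  rw [tan_half' _ hne, hsin, hcos]
  rw [div_div_div_cancel_right₀ (by positivity : sa^2*sb^2*sc^2 ≠ 0)]
  rw [div_eq_div_iff (by positivity) (ne_of_gt hV)]
  ring

lemma arccos_aux (x y n V : ℝ) (hx : 1 < x) (hy : 1 < y) (hV : 0 < V)
    (h : (x^2 - 1) * (y^2 - 1) - n^2 = V^2) :
    Real.cos (Real.arccos (n / (Real.sqrt (x^2-1) * Real.sqrt (y^2-1))))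
      = n / (Real.sqrt (x^2-1) * Real.sqrt (y^2-1)) ∧
    Real.sin (Real.arccos (n / (Real.sqrt (x^2-1) * Real.sqrt (y^2-1))))
      = V / (Real.sqrt (x^2-1) * Real.sqrt (y^2-1)) := by
  set sx := Real.sqrt (x^2-1) with hsx
  set sy := Real.sqrt (y^2-1) with hsy
  have hsx2 : sx^2 = x^2-1 := Real.sq_sqrt (by nlinarith)
  have hsy2 : sy^2 = y^2-1 := Real.sq_sqrt (by nlinarith)
  have hsx0 : 0 < sx := Real.sqrt_pos.2 (by nlinarith)
  have hsy0 : 0 < sy := Real.sqrt_pos.2 (by nlinarith)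
  have h' : sx^2 * sy^2 - n^2 = V^2 := by rw [hsx2, hsy2]; exact h
  have hprod : 0 < sx * sy := mul_pos hsx0 hsy0
  have hplus : 0 < sx * sy + n := by nlinarith [sq_nonneg (sx*sy + n), sq_nonneg (sx*sy - n)]
  have hminus : 0 < sx * sy - n := by nlinarith [sq_nonneg (sx*sy + n), sq_nonneg (sx*sy - n)]
  have hlow : -1 ≤ n / (sx * sy) := by
    rw [le_div_iff₀ hprod]; nlinarith
  have hhigh : n / (sx * sy) ≤ 1 := by
    rw [div_le_one hprod]; nlinarith
  refine ⟨Real.cos_arccos hlow hhigh, ?_⟩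
  rw [Real.sin_arccos]
  rw [show (1:ℝ) - (n / (sx*sy))^2 = (V/(sx*sy))^2 by
    field_simp; linear_combination h']
  exact Real.sqrt_sq (by positivity)

set_option maxHeartbeats 2000000 in
lemma tri_key (A B C : Fin 3 → ℝ) (hA : inH2 A) (hB : inH2 B) (hC : inH2 C)
    (hV : 0 < det3 A B C) :
    (Real.tan ((hypAngle A B C + hypAngle B C A - hypAngle C A B)/2)
       / (2 * Real.cosh (arcosh (-mink A B)/2)^2)) • (B + mink A B • A)
    + (Real.tan ((hypAngle A B C + hypAngle C A B - hypAngle B C A)/2)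
       / (2 * Real.cosh (arcosh (-mink A C)/2)^2)) • (C + mink A C • A)
    = (1/(1 - mink A B)) • mcross A B - (1/(1 - mink A C)) • mcross A C := by
  obtain ⟨hA1, hA2⟩ := hA
  obtain ⟨hB1, hB2⟩ := hB
  obtain ⟨hC1, hC2⟩ := hC
  set V := det3 A B C with hVd
  set a := -mink B C with had
  set b := -mink A C with hbd
  set c := -mink A B with hcd
  clear_value V a b c
  have ea : mink B C = -a := by rw [had]; ring
  have eb : mink A C = -b := by rw [hbd]; ring
  have ec : mink A B = -c := by rw [hcd]; ring
  have hV2 : V^2 = 2*a*b*c + 1 - a^2 - b^2 - c^2 := by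
    rw [hVd, gram A B C hA1 hB1 hC1, ea, eb, ec]; ring
  have ha0 : 1 ≤ a := by
    have := mink_le B C ⟨hB1, hB2⟩ ⟨hC1, hC2⟩; rw [had]; linarith
  have hb0 : 1 ≤ b := by
    have := mink_le A C ⟨hA1, hA2⟩ ⟨hC1, hC2⟩; rw [hbd]; linarith
  have hc0 : 1 ≤ c := by
    have := mink_le A B ⟨hA1, hA2⟩ ⟨hB1, hB2⟩; rw [hcd]; linarith
  have ha1 : 1 < a := by nlinarith [hV2, hV, sq_nonneg (b - c)]
  have hb1 : 1 < b := by nlinarith [hV2, hV, sq_nonneg (a - c)]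
  have hc1 : 1 < c := by nlinarith [hV2, hV, sq_nonneg (a - b)]
  -- canonical angle forms
  have hangle1 : hypAngle A B C = Real.arccos ((b*c - a) /
      (Real.sqrt (c^2-1) * Real.sqrt (b^2-1))) := by
    rw [hypAngle_eq A B C hA1 hB1 hC1, ea, eb, ec]
    congr 1
    rw [neg_sq, neg_sq]
    ring
  have hangle2 : hypAngle B C A = Real.arccos ((a*c - b) /
      (Real.sqrt (a^2-1) * Real.sqrt (c^2-1))) := by
    rw [hypAngle_eq B C A hB1 hC1 hA1, mink_comm C A, mink_comm B A, ea, eb, ec]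
    congr 1
    rw [neg_sq, neg_sq]
    ring
  have hangle3 : hypAngle C A B = Real.arccos ((a*b - c) /
      (Real.sqrt (b^2-1) * Real.sqrt (a^2-1))) := by
    rw [hypAngle_eq C A B hC1 hA1 hB1, mink_comm C A, mink_comm C B, ea, eb, ec]
    congr 1
    rw [neg_sq, neg_sq]
    ring
  obtain ⟨hcα, hsα⟩ := arccos_aux c b (b*c - a) V hc1 hb1 hV (by linear_combination -hV2)
  obtain ⟨hcβ, hsβ⟩ := arccos_aux a c (a*c - b) V ha1 hc1 hV (by linear_combination -hV2)
  obtain ⟨hcγ, hsγ⟩ := arccos_aux b a (a*b - c) V hb1 ha1 hV (by linear_combination -hV2)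
  have hsa2 : Real.sqrt (a^2-1)^2 = a^2-1 := Real.sq_sqrt (by nlinarith)
  have hsb2 : Real.sqrt (b^2-1)^2 = b^2-1 := Real.sq_sqrt (by nlinarith)
  have hsc2 : Real.sqrt (c^2-1)^2 = c^2-1 := Real.sq_sqrt (by nlinarith)
  have hsa0 : 0 < Real.sqrt (a^2-1) := Real.sqrt_pos.2 (by nlinarith)
  have hsb0 : 0 < Real.sqrt (b^2-1) := Real.sqrt_pos.2 (by nlinarith)
  have hsc0 : 0 < Real.sqrt (c^2-1) := Real.sqrt_pos.2 (by nlinarith)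
  have T1 : Real.tan ((hypAngle A B C + hypAngle B C A - hypAngle C A B)/2)
      = (a+b-c-1)/V := by
    rw [hangle1, hangle2, hangle3]
    exact S1core a b c V _ _ _ _ _ _ hV hsa0 hsb0 hsc0 ha1 hb1 hc1 hV2
      hcα hsα hcβ hsβ hcγ hsγ hsa2 hsb2 hsc2
  have T2 : Real.tan ((hypAngle A B C + hypAngle C A B - hypAngle B C A)/2)
      = (a+c-b-1)/V := by
    rw [hangle1, hangle2, hangle3]
    refine S1core a c b V (Real.sqrt (a^2-1)) (Real.sqrt (c^2-1)) (Real.sqrt (b^2-1))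
      _ _ _ hV hsa0 hsc0 hsb0 ha1 hc1 hb1 (by linear_combination hV2)
      (by rw [hcα]; ring_nf) (by rw [hsα]; ring_nf)
      (by rw [hcγ]; ring_nf) (by rw [hsγ]; ring_nf)
      (by rw [hcβ]; ring_nf) (by rw [hsβ]; ring_nf)
      hsa2 hsc2 hsb2
  have hcosh1 : 2 * Real.cosh (arcosh c / 2)^2 = c + 1 := two_cosh_sq_half hc0
  have hcosh2 : 2 * Real.cosh (arcosh b / 2)^2 = b + 1 := two_cosh_sq_half hb0
  have hd1 : (1:ℝ) - mink A B = c + 1 := by rw [ec]; ring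
  have hd2 : (1:ℝ) - mink A C = b + 1 := by rw [eb]; ring
  rw [T1, T2, hcosh1, hcosh2, hd1, hd2, ec, eb]
  -- now a pure algebraic vector identity; prove by pairing with the basis A, B, C
  have hV0 : V ≠ 0 := ne_of_gt hV
  have hbp : (0:ℝ) < b + 1 := by linarith
  have hcp : (0:ℝ) < c + 1 := by linarith
  apply mink_basis_eq A B C _ _ (by rw [← hVd]; exact hV0)
  · rw [mink_comb_left, mink_sub_smul, mink_mcross, mink_mcross, det3_xyx, det3_xyx,
      mink_comm B A, mink_comm C A, ec, eb, hA1]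
    ring
  · rw [mink_comb_left, mink_sub_smul, mink_mcross, mink_mcross, det3_xyy,
      det3_swap23, ← hVd, mink_comm C B, ea, ec, hB1]
    field_simp
    linear_combination (-(c+1)) * hV2
  · rw [mink_comb_left, mink_sub_smul, mink_mcross, mink_mcross, det3_xyy,
      ← hVd, ea, eb, hC1]
    field_simp
    linear_combination (-(b+1)) * hV2

/-- Edge weight `c_j` of the edge `(p₀, p_j)` of a hyperbolic vertex star. -/
def hypStarWeight (m : ℕ) (p0 : Fin 3 → ℝ) (p : ZMod m → Fin 3 → ℝ) (j : ZMod m) : ℝ :=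
  (Real.tan ((hypAngle p0 (p j) (p (j+1)) + hypAngle (p j) (p (j+1)) p0
      - hypAngle (p (j+1)) p0 (p j)) / 2)
   + Real.tan ((hypAngle p0 (p (j-1)) (p j) + hypAngle (p j) p0 (p (j-1))
      - hypAngle (p (j-1)) (p j) p0) / 2))
  / (2 * Real.cosh (arcosh (-(mink p0 (p j))) / 2) ^ 2)

/-- Vertex weight `d₀` of a hyperbolic vertex star. -/
def hypStarVertexWeight (m : ℕ) [NeZero m] (p0 : Fin 3 → ℝ) (p : ZMod m → Fin 3 → ℝ) : ℝ :=
  ∑ j : ZMod m, hypStarWeight m p0 p j * Real.sinh (arcosh (-(mink p0 (p j))) / 2) ^ 2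

/-- Hyperbolic analogue of Lemma 2.2, second part (vertex-star form, Section 3.1):
`∑ c_j·p_j = (2·d₀ + ∑ c_j)·p₀`, equivalently `∑ c_j·(p_j − p₀) = 2·d₀·p₀`. -/
theorem hyp_dual_face_formula
    (m : ℕ) (hm : 3 ≤ m) [NeZero m]
    (p0 : Fin 3 → ℝ) (p : ZMod m → Fin 3 → ℝ)
    (hp0 : inH2 p0) (hp : ∀ j, inH2 (p j))
    (hdet : ∀ j : ZMod m, 0 < det3 p0 (p j) (p (j+1))) :
    ∑ j : ZMod m, hypStarWeight m p0 p j • p j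
      = (2 * hypStarVertexWeight m p0 p + ∑ j : ZMod m, hypStarWeight m p0 p j) • p0 := by
  classical
  set w1 : ZMod m → ℝ := fun j =>
    Real.tan ((hypAngle p0 (p j) (p (j+1)) + hypAngle (p j) (p (j+1)) p0
      - hypAngle (p (j+1)) p0 (p j)) / 2)
      / (2 * Real.cosh (arcosh (-mink p0 (p j)) / 2) ^ 2) with hw1
  set w2 : ZMod m → ℝ := fun j =>
    Real.tan ((hypAngle p0 (p j) (p (j+1)) + hypAngle (p (j+1)) p0 (p j)
      - hypAngle (p j) (p (j+1)) p0) / 2)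
      / (2 * Real.cosh (arcosh (-mink p0 (p (j+1))) / 2) ^ 2) with hw2
  set u : ZMod m → (Fin 3 → ℝ) := fun j => p j + mink p0 (p j) • p0 with hu
  set F : ZMod m → (Fin 3 → ℝ) := fun j => (1/(1 - mink p0 (p j))) • mcross p0 (p j) with hF
  have key : ∀ j : ZMod m, w1 j • u j + w2 j • u (j+1) = F j - F (j+1) :=
    fun j => tri_key p0 (p j) (p (j+1)) hp0 (hp j) (hp (j+1)) (hdet j)
  have sumF : ∑ j : ZMod m, F j = ∑ j : ZMod m, F (j+1) :=
    Fintype.sum_equiv (Equiv.subRight (1 : ZMod m)) F (fun j => F (j+1))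
      (fun x => by show F x = F (x - 1 + 1); rw [show x - 1 + 1 = x from by ring])
  have sumzero : (∑ j : ZMod m, w1 j • u j) + (∑ j : ZMod m, w2 j • u (j+1)) = 0 := by
    rw [← Finset.sum_add_distrib]
    rw [Finset.sum_congr rfl (fun j _ => key j)]
    rw [Finset.sum_sub_distrib, sumF, sub_self]
  have sum2 : ∑ j : ZMod m, w2 j • u (j+1) = ∑ j : ZMod m, w2 (j-1) • u j :=
    Fintype.sum_equiv (Equiv.addRight (1 : ZMod m)) _ _
      (fun x => by
        show w2 x • u (x+1) = w2 (x + 1 - 1) • u (x+1)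
        rw [show x + 1 - 1 = x from by ring])
  have sumu : ∑ j : ZMod m, (w1 j + w2 (j-1)) • u j = 0 := by
    have : ∑ j : ZMod m, (w1 j + w2 (j-1)) • u j
        = (∑ j : ZMod m, w1 j • u j) + (∑ j : ZMod m, w2 (j-1) • u j) := by
      rw [← Finset.sum_add_distrib]
      exact Finset.sum_congr rfl (fun j _ => add_smul _ _ _)
    rw [this, ← sum2, sumzero]
  have hw : ∀ j : ZMod m, hypStarWeight m p0 p j = w1 j + w2 (j-1) := by
    intro j
    have e1 : (j - 1) + (1 : ZMod m) = j := by ring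
    rw [hw1, hw2]
    simp only [e1]
    rw [hypStarWeight, add_div]
  have hcs : ∀ j : ZMod m, 1 ≤ -mink p0 (p j) := by
    intro j
    have := mink_le p0 (p j) hp0 (hp j); linarith
  have expand : ∀ j : ZMod m, hypStarWeight m p0 p j • p j
      = hypStarWeight m p0 p j • u j
        + (hypStarWeight m p0 p j * (-mink p0 (p j))) • p0 := by
    intro j
    rw [hu]
    simp only [smul_add, smul_smul]
    module
  rw [Finset.sum_congr rfl (fun j _ => expand j), Finset.sum_add_distrib]
  rw [Finset.sum_congr rfl (fun j (_ : j ∈ Finset.univ) =>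
    congrArg (· • u j) (hw j)), sumu, zero_add]
  rw [← Finset.sum_smul]
  congr 1
  rw [hypStarVertexWeight, Finset.mul_sum, ← Finset.sum_add_distrib]
  refine Finset.sum_congr rfl (fun j _ => ?_)
  rw [sinh_sq_half (hcs j)]
  ring
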